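/- Let G, G_Δ : ℝ → ℝ be bounded, increasing, left-continuous with limits 0 at −∞, let y(ξ) = sup{x : x + G(x) < ξ}, y_Δ(ξ) = sup{x : x + G_Δ(x) < ξ}, and let φ, ψ be defined by φ(r) = sup{ξ : y(ξ') < y_Δ(2r − ξ') for all ξ' < ξ}, ψ(r) = 2r − φ(r). Then the function 𝒴(r) := y(φ(r)) satisfies 𝒴(r) = sup{x ∈ ℝ : x + ½(G + G_Δ)(x) < r} for all r ∈ ℝ. -/
import Mathlib


open MeasureTheory Set Filter

private lemma aux_ne {f : ℝ → ℝ} {M : ℝ} (hM : ∀ x, |f x| ≤ M) (c : ℝ) :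
    {x : ℝ | x + f x < c}.Nonempty := by
  refine ⟨c - M - 1, ?_⟩
  have := abs_le.1 (hM (c - M - 1))
  simp only [Set.mem_setOf_eq]
  linarith [this.2]

private lemma aux_bdd {f : ℝ → ℝ} {M : ℝ} (hM : ∀ x, |f x| ≤ M) (c : ℝ) :
    BddAbove {x : ℝ | x + f x < c} := by
  refine ⟨c + M, fun x hx => ?_⟩
  have := abs_le.1 (hM x)
  simp only [Set.mem_setOf_eq] at hx
  linarith [this.1]

private lemma aux_ge {f : ℝ → ℝ} {M : ℝ} (hM : ∀ x, |f x| ≤ M) {c x : ℝ}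
    (h : x + f x < c) : x ≤ sSup {z : ℝ | z + f z < c} :=
  le_csSup (aux_bdd hM c) h

private lemma aux_le {f : ℝ → ℝ} {M : ℝ} (hM : ∀ x, |f x| ≤ M) (hm : Monotone f) {c x : ℝ}
    (h : c ≤ x + f x) : sSup {z : ℝ | z + f z < c} ≤ x := by
  apply csSup_le (aux_ne hM c)
  intro z hz
  simp only [Set.mem_setOf_eq] at hz
  by_contra hzx
  push_neg at hzx
  have := hm hzx.le
  linarith

private lemma aux_gt {f : ℝ → ℝ} {M : ℝ} (hM : ∀ x, |f x| ≤ M) (hm : Monotone f) {c x : ℝ}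
    (h : sSup {z : ℝ | z + f z < c} < x) : c < x + f x := by
  set w := (sSup {z : ℝ | z + f z < c} + x) / 2 with hw
  have hw1 : sSup {z : ℝ | z + f z < c} < w := by rw [hw]; linarith
  have hw2 : w < x := by rw [hw]; linarith
  have hc : c ≤ w + f w := by
    by_contra h'
    push_neg at h'
    exact absurd (aux_ge hM h') (not_le.2 hw1)
  have := hm hw2.le
  linarith

private lemma aux_sup_le {f : ℝ → ℝ} {M : ℝ} (hM : ∀ x, |f x| ≤ M) (hm : Monotone f)
    (hl : ∀ x : ℝ, ContinuousWithinAt f (Set.Iio x) x) (c : ℝ) :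
    sSup {z : ℝ | z + f z < c} + f (sSup {z : ℝ | z + f z < c}) ≤ c := by
  set s := sSup {z : ℝ | z + f z < c} with hs
  have key : ∀ x < s, x + f x < c := by
    intro x hx
    obtain ⟨z, hz, hxz⟩ := exists_lt_of_lt_csSup (aux_ne hM c) hx
    have := hm hxz.le
    simp only [Set.mem_setOf_eq] at hz
    linarith
  have h1 : Tendsto (fun x => x + f x) (nhdsWithin s (Set.Iio s)) (nhds (s + f s)) :=
    (continuousWithinAt_id.add (hl s)).tendsto
  exact le_of_tendsto h1 (eventually_nhdsWithin_of_forall (fun x hx => (key x hx).le))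

/-- The matched characteristic `𝒴(r) = y(φ(r))` is the Lagrangian labeling function
associated with the averaged cumulative energy `½(G + G_Δ)`:
`𝒴(r) = sup{x : x + ½(G(x) + G_Δ(x)) < r}`. -/
theorem matched_characteristic_eq_average
    (G GΔ : ℝ → ℝ)
    (hGbdd : ∃ M : ℝ, ∀ x, |G x| ≤ M) (hGΔbdd : ∃ M : ℝ, ∀ x, |GΔ x| ≤ M)
    (hGm : Monotone G) (hGΔm : Monotone GΔ)
    (hGleft : ∀ x : ℝ, ContinuousWithinAt G (Set.Iio x) x)
    (hGΔleft : ∀ x : ℝ, ContinuousWithinAt GΔ (Set.Iio x) x)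
    (hGlim : Tendsto G atBot (nhds 0)) (hGΔlim : Tendsto GΔ atBot (nhds 0))
    (y yΔ : ℝ → ℝ)
    (hy : ∀ ξ, y ξ = sSup {x : ℝ | x + G x < ξ})
    (hyΔ : ∀ ξ, yΔ ξ = sSup {x : ℝ | x + GΔ x < ξ})
    (φ ψ : ℝ → ℝ)
    (hφ : ∀ r, φ r = sSup {ξ : ℝ | ∀ ξ' < ξ, y ξ' < yΔ (2 * r - ξ')})
    (hψ : ∀ r, ψ r = 2 * r - φ r) :
    ∀ r : ℝ, y (φ r) = sSup {x : ℝ | x + (G x + GΔ x) / 2 < r} := by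
  obtain ⟨M, hM⟩ := hGbdd
  obtain ⟨MΔ, hMΔ⟩ := hGΔbdd
  intro r
  have hM0 : 0 ≤ M := le_trans (abs_nonneg _) (hM 0)
  have hMΔ0 : 0 ≤ MΔ := le_trans (abs_nonneg _) (hMΔ 0)
  -- the set defining φ
  have hTne : {ξ : ℝ | ∀ ξ' < ξ, y ξ' < yΔ (2 * r - ξ')}.Nonempty := by
    refine ⟨r - (M + MΔ + 1) / 2, fun ξ' hξ' => ?_⟩
    have h1 : y ξ' ≤ ξ' + M := by
      rw [hy]
      exact aux_le hM hGm (by have := abs_le.1 (hM (ξ' + M)); linarith [this.1])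
    have h2 : 2 * r - ξ' - MΔ - 1 ≤ yΔ (2 * r - ξ') := by
      rw [hyΔ]
      exact aux_ge hMΔ (by have := abs_le.1 (hMΔ (2 * r - ξ' - MΔ - 1)); linarith [this.2])
    linarith
  have hTbdd : BddAbove {ξ : ℝ | ∀ ξ' < ξ, y ξ' < yΔ (2 * r - ξ')} := by
    refine ⟨r + (M + MΔ + 1) / 2, fun ξ hξ => ?_⟩
    refine le_of_forall_lt (fun ξ' hξ' => ?_)
    have hcond := hξ ξ' hξ'
    have h1 : ξ' - M - 1 ≤ y ξ' := by
      rw [hy]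
      exact aux_ge hM (by have := abs_le.1 (hM (ξ' - M - 1)); linarith [this.2])
    have h2 : yΔ (2 * r - ξ') ≤ 2 * r - ξ' + MΔ := by
      rw [hyΔ]
      exact aux_le hMΔ hGΔm (by have := abs_le.1 (hMΔ (2 * r - ξ' + MΔ)); linarith [this.1])
    linarith
  -- the key identity: y (φ r) = yΔ (2r - φ r)
  have hkey : y (φ r) = yΔ (2 * r - φ r) := by
    apply le_antisymm
    · by_contra hcon
      push_neg at hcon
      rw [hy] at hcon
      obtain ⟨z, hz, hzgt⟩ := exists_lt_of_lt_csSup (aux_ne hM (φ r)) hcon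
      simp only [Set.mem_setOf_eq] at hz
      rw [hyΔ] at hzgt
      have hz2 : 2 * r - φ r < z + GΔ z := aux_gt hMΔ hGΔm hzgt
      set ξ' := max (2 * r - (z + GΔ z)) ((z + G z + φ r) / 2) with hξ'def
      have hξ'lt : ξ' < φ r := max_lt (by linarith) (by linarith)
      have hξ'gt : z + G z < ξ' :=
        lt_of_lt_of_le (by linarith) (le_max_right (2 * r - (z + GΔ z)) ((z + G z + φ r) / 2))
      have hξ'ge : 2 * r - ξ' ≤ z + GΔ z := by
        have := le_max_left (2 * r - (z + GΔ z)) ((z + G z + φ r) / 2)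
        rw [hξ'def]; linarith
      rw [hφ r] at hξ'lt
      obtain ⟨ξ'', hξ''T, hltξ⟩ := exists_lt_of_lt_csSup hTne hξ'lt
      have hcond := hξ''T ξ' hltξ
      have ha : z ≤ y ξ' := by rw [hy]; exact aux_ge hM hξ'gt
      have hb : yΔ (2 * r - ξ') ≤ z := by rw [hyΔ]; exact aux_le hMΔ hGΔm hξ'ge
      linarith
    · by_contra hcon
      push_neg at hcon
      rw [hyΔ] at hcon
      obtain ⟨z, hz, hzgt⟩ := exists_lt_of_lt_csSup (aux_ne hMΔ (2 * r - φ r)) hcon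
      simp only [Set.mem_setOf_eq] at hz
      set z' := (y (φ r) + z) / 2 with hz'def
      have hz'1 : y (φ r) < z' := by rw [hz'def]; linarith
      have hz'2 : z' < z := by rw [hz'def]; linarith
      have hFz' : φ r < z' + G z' := by
        rw [hy] at hz'1
        exact aux_gt hM hGm hz'1
      set ξ₀ := min (2 * r - (z + GΔ z)) (z' + G z') with hξ₀def
      have hξ₀gt : φ r < ξ₀ := lt_min (by linarith) hFz'
      have hmem : ξ₀ ∈ {ξ : ℝ | ∀ ξ' < ξ, y ξ' < yΔ (2 * r - ξ')} := by
        intro ξ' hξ'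
        have h1 : ξ' ≤ z' + G z' :=
          le_of_lt (lt_of_lt_of_le hξ' (min_le_right (2 * r - (z + GΔ z)) (z' + G z')))
        have h2 : z + GΔ z < 2 * r - ξ' := by
          have := lt_of_lt_of_le hξ' (min_le_left (2 * r - (z + GΔ z)) (z' + G z'))
          linarith
        have ha : y ξ' ≤ z' := by rw [hy]; exact aux_le hM hGm h1
        have hb : z ≤ yΔ (2 * r - ξ') := by rw [hyΔ]; exact aux_ge hMΔ h2
        linarith
      have := le_csSup hTbdd hmem
      rw [← hφ r] at this
      linarith
  -- consequences
  have hA : y (φ r) + G (y (φ r)) ≤ φ r := by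
    rw [hy]; exact aux_sup_le hM hGm hGleft (φ r)
  have hB : y (φ r) + GΔ (y (φ r)) ≤ 2 * r - φ r := by
    rw [hkey, hyΔ]; exact aux_sup_le hMΔ hGΔm hGΔleft (2 * r - φ r)
  have hub : ∀ x ∈ {x : ℝ | x + (G x + GΔ x) / 2 < r}, x ≤ y (φ r) := by
    intro x hx
    simp only [Set.mem_setOf_eq] at hx
    by_contra hcon
    push_neg at hcon
    have h1 : φ r < x + G x := by
      rw [hy] at hcon
      exact aux_gt hM hGm hcon
    have h2 : 2 * r - φ r < x + GΔ x := by
      rw [hkey, hyΔ] at hcon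
      exact aux_gt hMΔ hGΔm hcon
    linarith
  have hSbdd : BddAbove {x : ℝ | x + (G x + GΔ x) / 2 < r} := ⟨y (φ r), hub⟩
  have hSne : {x : ℝ | x + (G x + GΔ x) / 2 < r}.Nonempty := by
    refine ⟨y (φ r) - 1, ?_⟩
    simp only [Set.mem_setOf_eq]
    have h1 := hGm (show y (φ r) - 1 ≤ y (φ r) by linarith)
    have h2 := hGΔm (show y (φ r) - 1 ≤ y (φ r) by linarith)
    linarith
  apply le_antisymm
  · by_contra hcon
    push_neg at hcon
    set w := (sSup {x : ℝ | x + (G x + GΔ x) / 2 < r} + y (φ r)) / 2 with hwdef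
    have hw1 : sSup {x : ℝ | x + (G x + GΔ x) / 2 < r} < w := by rw [hwdef]; linarith
    have hw2 : w < y (φ r) := by rw [hwdef]; linarith
    have hwS : w ∈ {x : ℝ | x + (G x + GΔ x) / 2 < r} := by
      simp only [Set.mem_setOf_eq]
      have h1 := hGm hw2.le
      have h2 := hGΔm hw2.le
      linarith
    have := le_csSup hSbdd hwS
    linarith
  · exact csSup_le hSne hub
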